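/- For α ≥ 0, the operator Ω_α p = −(d/dx)(α p + x p') is complex zero decreasing: for every real polynomial p, the number of non-real zeros of Ω_α p is at most the number of non-real zeros of p. -/
import Mathlib

open Polynomial Finset

lemma nonreal_card (p : Polynomial ℝ) (hp : p ≠ 0) :
    (((p.map (algebraMap ℝ ℂ)).roots.filter (fun z : ℂ => z.im ≠ 0)).card)
      = p.natDegree - Multiset.card p.roots := by
  classical
  set P := p.map (algebraMap ℝ ℂ) with hPdef
  have hP : P ≠ 0 := Polynomial.map_ne_zero hp
  have htot : Multiset.card P.roots = p.natDegree := by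
    rw [Polynomial.splits_iff_card_roots.mp (IsAlgClosed.splits (k := ℂ) P),
      hPdef, Polynomial.natDegree_map]
  have hfilt : P.roots.filter (fun z : ℂ => ¬ z.im ≠ 0) = p.roots.map (algebraMap ℝ ℂ) := by
    ext z
    rw [Multiset.count_filter]
    by_cases hz : z.im = 0
    · have hz' : (algebraMap ℝ ℂ) z.re = z := Complex.ext rfl hz.symm
      rw [if_pos (by simp [hz]), ← hz', Multiset.count_map_eq_count' _ _
        (fun a b hab => by simpa using congrArg Complex.re hab),
        Polynomial.count_roots, Polynomial.count_roots, hPdef,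
        Polynomial.eq_rootMultiplicity_map (algebraMap ℝ ℂ).injective]
    · rw [if_neg (by simp [hz]), eq_comm, Multiset.count_eq_zero]
      intro hmem
      obtain ⟨r, _, hr⟩ := Multiset.mem_map.mp hmem
      exact hz (by rw [← hr]; simp)
  have hsplit := Multiset.filter_add_not (fun z : ℂ => z.im ≠ 0) P.roots
  have hcard := congrArg Multiset.card hsplit
  rw [Multiset.card_add, hfilt, Multiset.card_map, htot] at hcard
  omega

lemma coeff_S (β : ℝ) (q : Polynomial ℝ) :
    (C β * q + X * derivative q).coeff q.natDegree
      = (β + q.natDegree) * q.leadingCoeff := by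
  rw [Polynomial.leadingCoeff]
  cases hn : q.natDegree with
  | zero =>
      simp [Polynomial.coeff_add, Polynomial.coeff_C_mul, Polynomial.mul_coeff_zero,
        Polynomial.coeff_X_zero]
  | succ k =>
      rw [Polynomial.coeff_add, Polynomial.coeff_C_mul, Polynomial.coeff_X_mul,
        Polynomial.coeff_derivative]
      push_cast
      ring

lemma natDegree_S (β : ℝ) (hβ : 0 < β) (q : Polynomial ℝ) (hq : q ≠ 0) :
    (C β * q + X * derivative q).natDegree = q.natDegree
      ∧ (C β * q + X * derivative q) ≠ 0 := by
  have hc : (C β * q + X * derivative q).coeff q.natDegree ≠ 0 := by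
    rw [coeff_S]
    exact mul_ne_zero (by positivity) (Polynomial.leadingCoeff_ne_zero.mpr hq)
  refine ⟨le_antisymm ?_ (Polynomial.le_natDegree_of_ne_zero hc), fun h => hc (by simp [h])⟩
  refine (Polynomial.natDegree_add_le _ _).trans (max_le (Polynomial.natDegree_C_mul_le _ _) ?_)
  rcases eq_or_ne (derivative q) 0 with h | h
  · simp [h]
  · have h1 : 1 ≤ q.natDegree := by
      by_contra hn
      exact h (Polynomial.derivative_of_natDegree_zero (by omega))
    calc (X * derivative q).natDegree ≤ X.natDegree + (derivative q).natDegree :=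
          Polynomial.natDegree_mul_le
      _ ≤ 1 + (q.natDegree - 1) := by
          gcongr
          · exact le_of_eq Polynomial.natDegree_X
          · exact Polynomial.natDegree_derivative_le q
      _ = q.natDegree := by omega

lemma deriv_psi (β : ℝ) (hβ : 0 < β) (q : Polynomial ℝ) {z : ℝ} (hz : z ≠ 0)
    (h0 : deriv (fun t : ℝ => |t| ^ β * q.eval t) z = 0) :
    (C β * q + X * derivative q).eval z = 0 := by
  have heval : (C β * q + X * derivative q).eval z
      = β * q.eval z + z * (derivative q).eval z := by simp
  rcases hz.lt_or_gt with hneg | hpos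
  · -- z < 0 : locally ψ t = (-t)^β * q.eval t
    have houter : HasDerivAt (fun y : ℝ => y ^ β) (β * (-z) ^ (β - 1)) (-z) :=
      Real.hasDerivAt_rpow_const (Or.inl (neg_ne_zero.mpr hz))
    have hinner : HasDerivAt (fun t : ℝ => -t) (-1) z := (hasDerivAt_id z).neg
    have hcomp : HasDerivAt (fun t : ℝ => (-t) ^ β) (β * (-z) ^ (β - 1) * (-1)) z :=
      houter.comp z hinner
    have h1 := hcomp.mul (q.hasDerivAt z)
    have h2 : (fun t : ℝ => |t| ^ β * q.eval t) =ᶠ[nhds z]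
        (fun t : ℝ => (-t) ^ β * q.eval t) :=
      (eventually_lt_nhds hneg).mono fun t ht => by dsimp only; rw [abs_of_neg ht]
    have hd := h1.congr_of_eventuallyEq h2
    have hdz := hd.deriv
    rw [h0] at hdz
    have hpow : (-z) ^ β = (-z) ^ (β - 1) * (-z) := by
      rw [← Real.rpow_add_one (neg_ne_zero.mpr hz) (β - 1)]
      norm_num
    have hfac : (0 : ℝ) = -((-z) ^ (β - 1) * (β * q.eval z + z * (derivative q).eval z)) := by
      rw [hdz, hpow]; ring
    have hne : (-z) ^ (β - 1) ≠ 0 := (Real.rpow_pos_of_pos (by linarith) _).ne'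
    rw [heval]
    have := hfac.symm
    rcases mul_eq_zero.mp (neg_eq_zero.mp this) with h | h
    · exact absurd h hne
    · exact h
  · -- 0 < z
    have h1 := (Real.hasDerivAt_rpow_const (p := β) (Or.inl hpos.ne')).mul (q.hasDerivAt z)
    have h2 : (fun t : ℝ => |t| ^ β * q.eval t) =ᶠ[nhds z]
        (fun t : ℝ => t ^ β * q.eval t) :=
      (eventually_gt_nhds hpos).mono fun t ht => by dsimp only; rw [abs_of_pos ht]
    have hd := h1.congr_of_eventuallyEq h2
    have hdz := hd.deriv
    rw [h0] at hdz
    have hpow : z ^ β = z ^ (β - 1) * z := by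
      rw [← Real.rpow_add_one hpos.ne' (β - 1)]
      norm_num
    have hfac : (0 : ℝ) = z ^ (β - 1) * (β * q.eval z + z * (derivative q).eval z) := by
      rw [hdz, hpow]; ring
    have hne : z ^ (β - 1) ≠ 0 := (Real.rpow_pos_of_pos hpos _).ne'
    rw [heval]
    rcases mul_eq_zero.mp hfac.symm with h | h
    · exact absurd h hne
    · exact h

lemma key (β : ℝ) (hβ : 0 < β) (q : Polynomial ℝ) (hq : q ≠ 0)
    (hS : (C β * q + X * derivative q) ≠ 0) :
    Multiset.card q.roots ≤ Multiset.card (C β * q + X * derivative q).roots := by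
  classical
  set S := C β * q + X * derivative q with hSdef
  set Z : Finset ℝ := insert 0 q.roots.toFinset with hZdef
  -- multiplicity bound
  have hmult : ∀ x : ℝ,
      (if x = 0 then q.rootMultiplicity 0 else q.rootMultiplicity x - 1)
        ≤ S.rootMultiplicity x := by
    intro x
    have hder : (X - C x) ^ (q.rootMultiplicity x - 1) ∣ derivative q :=
      dvd_trans (pow_dvd_pow _ (q.rootMultiplicity_sub_one_le_derivative_rootMultiplicity x))
        (Polynomial.pow_rootMultiplicity_dvd _ _)
    split_ifs with hx
    · subst hx
      rw [Polynomial.le_rootMultiplicity_iff hS]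
      refine dvd_add (Dvd.dvd.mul_left (Polynomial.pow_rootMultiplicity_dvd q 0) _) ?_
      cases hm : q.rootMultiplicity 0 with
      | zero => exact one_dvd _
      | succ k =>
          have hk : (X - C (0:ℝ)) ^ k ∣ derivative q := by
            refine dvd_trans (pow_dvd_pow _ ?_) hder
            omega
          rw [map_zero, sub_zero] at hk ⊢
          rw [pow_succ, mul_comm]
          exact mul_dvd_mul_left X ((pow_dvd_pow _ (by omega)).trans hk)
    · rw [Polynomial.le_rootMultiplicity_iff hS]
      refine dvd_add (Dvd.dvd.mul_left ?_ _) (Dvd.dvd.mul_left hder _)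
      exact (pow_dvd_pow _ (Nat.sub_le _ _)).trans (Polynomial.pow_rootMultiplicity_dvd q x)
  -- interleaving via Rolle
  have hZ : Z.card ≤ (S.roots.toFinset \ Z).card + 1 := by
    refine Finset.card_le_diff_of_interleaved fun x hx y hy hxy hxy' => ?_
    set ψ : ℝ → ℝ := fun t => |t| ^ β * q.eval t with hψdef
    have hψcont : Continuous ψ :=
      (continuous_abs.rpow_const fun t => Or.inr hβ.le).mul q.continuous
    have hψ0 : ∀ t ∈ Z, ψ t = 0 := by
      intro t ht
      rcases Finset.mem_insert.mp ht with rfl | ht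
      · simp [hψdef, Real.zero_rpow hβ.ne']
      · have : q.eval t = 0 := (Polynomial.mem_roots hq).mp (Multiset.mem_toFinset.mp ht)
        simp [hψdef, this]
    obtain ⟨z, hzmem, hz0⟩ := exists_deriv_eq_zero hxy hψcont.continuousOn
      ((hψ0 x hx).trans (hψ0 y hy).symm)
    have hzne : z ≠ 0 := by
      rintro rfl
      exact hxy' 0 (Finset.mem_insert_self 0 _) hzmem
    have hSz : S.eval z = 0 := deriv_psi β hβ q hzne hz0
    refine ⟨z, Multiset.mem_toFinset.mpr ((Polynomial.mem_roots hS).mpr hSz), hzmem.1, hzmem.2⟩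
  -- counting
  have hsum_le_card : ∀ F : Finset ℝ, ∑ x ∈ F, S.roots.count x ≤ Multiset.card S.roots := by
    intro F
    calc ∑ x ∈ F, S.roots.count x ≤ ∑ x ∈ F ∪ S.roots.toFinset, S.roots.count x :=
          Finset.sum_le_sum_of_subset Finset.subset_union_left
      _ = ∑ x ∈ S.roots.toFinset, S.roots.count x := by
          refine (Finset.sum_subset Finset.subset_union_right fun x _ hx => ?_).symm
          exact Multiset.count_eq_zero.mpr (fun h => hx (Multiset.mem_toFinset.mpr h))
      _ = Multiset.card S.roots := Multiset.toFinset_sum_count_eq _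
  have h1 : Multiset.card q.roots = ∑ x ∈ Z, q.roots.count x := by
    rw [← Multiset.toFinset_sum_count_eq q.roots]
    refine Finset.sum_subset (Finset.subset_insert _ _) fun x _ hx => ?_
    exact Multiset.count_eq_zero.mpr (fun h => hx (Multiset.mem_toFinset.mpr h))
  have h2 : ∀ x ∈ Z, q.roots.count x ≤
      (if x = 0 then q.rootMultiplicity 0 else q.rootMultiplicity x - 1)
        + (if x = 0 then 0 else 1) := by
    intro x hx
    rw [Polynomial.count_roots]
    split_ifs with h
    · subst h; omega
    · have hxr : x ∈ q.roots.toFinset := (Finset.mem_insert.mp hx).resolve_left h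
      have : 1 ≤ q.rootMultiplicity x := by
        rw [← Polynomial.count_roots]
        exact Multiset.one_le_count_iff_mem.mpr (Multiset.mem_toFinset.mp hxr)
      omega
  have h3 : ∑ x ∈ Z, (if x = 0 then 0 else 1) = Z.card - 1 := by
    rw [← Finset.sum_erase_add Z _ (Finset.mem_insert_self 0 _), if_pos rfl, add_zero]
    rw [Finset.sum_congr rfl (fun x hx => if_neg (Finset.mem_erase.mp hx).1),
      Finset.sum_const, smul_eq_mul, mul_one, Finset.card_erase_of_mem (Finset.mem_insert_self 0 _)]
  have h4 : (Z.card - 1) ≤ ∑ x ∈ S.roots.toFinset \ Z, S.roots.count x := by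
    have : (S.roots.toFinset \ Z).card ≤ ∑ x ∈ S.roots.toFinset \ Z, S.roots.count x := by
      rw [Finset.card_eq_sum_ones]
      refine Finset.sum_le_sum fun x hx => ?_
      exact Multiset.one_le_count_iff_mem.mpr
        (Multiset.mem_toFinset.mp (Finset.mem_sdiff.mp hx).1)
    omega
  calc Multiset.card q.roots
      = ∑ x ∈ Z, q.roots.count x := h1
    _ ≤ ∑ x ∈ Z, ((if x = 0 then q.rootMultiplicity 0 else q.rootMultiplicity x - 1)
          + (if x = 0 then 0 else 1)) := Finset.sum_le_sum h2
    _ = ∑ x ∈ Z, (if x = 0 then q.rootMultiplicity 0 else q.rootMultiplicity x - 1)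
          + (Z.card - 1) := by rw [Finset.sum_add_distrib, h3]
    _ ≤ ∑ x ∈ Z, S.roots.count x + ∑ x ∈ S.roots.toFinset \ Z, S.roots.count x := by
        refine add_le_add (Finset.sum_le_sum fun x _ => ?_) h4
        rw [Polynomial.count_roots]; exact hmult x
    _ = ∑ x ∈ Z ∪ (S.roots.toFinset \ Z), S.roots.count x := by
        rw [Finset.sum_union Finset.disjoint_sdiff]
    _ ≤ Multiset.card S.roots := hsum_le_card _

/-- For `α ≥ 0`, the operator `Ω_α p = -(α p + x p')'` is complex zero decreasing:
the number of non-real zeros of `Ω_α p` is at most the number of non-real zeros of `p`. -/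
theorem stmt_19 (α : ℝ) (hα : 0 ≤ α) (p : Polynomial ℝ) :
    (((-(Polynomial.derivative
          (Polynomial.C α * p + Polynomial.X * Polynomial.derivative p))).map
        (algebraMap ℝ ℂ)).roots.filter (fun z : ℂ => z.im ≠ 0)).card
      ≤ ((p.map (algebraMap ℝ ℂ)).roots.filter (fun z : ℂ => z.im ≠ 0)).card := by
  classical
  by_cases hq : derivative p = 0
  · have : derivative (C α * p + X * derivative p) = 0 := by
      simp [hq]
    simp [this]
  · set q := derivative p with hqdef
    have hp : p ≠ 0 := fun h => hq (by simp [hqdef, h])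
    set β : ℝ := α + 1 with hβdef
    have hβ : 0 < β := by positivity
    have hrw : derivative (C α * p + X * q) = C β * q + X * derivative q := by
      simp only [derivative_add, derivative_mul, derivative_C, derivative_X, zero_mul,
        one_mul, hβdef, C_add, C_1]
      ring
    obtain ⟨hdeg, hS⟩ := natDegree_S β hβ q hq
    have hkey := key β hβ q hq hS
    set S := C β * q + X * derivative q with hSdef
    have hnp : p.natDegree ≠ 0 := fun h => hq (Polynomial.derivative_of_natDegree_zero h)
    have hnq : q.natDegree = p.natDegree - 1 := by
      refine le_antisymm (Polynomial.natDegree_derivative_le p) ?_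
      refine Polynomial.le_natDegree_of_ne_zero ?_
      rw [hqdef, Polynomial.coeff_derivative]
      have h1 : p.natDegree - 1 + 1 = p.natDegree := by omega
      rw [h1]
      exact mul_ne_zero (Polynomial.leadingCoeff_ne_zero.mpr hp) (by positivity)
    have hLHS : (((-derivative (C α * p + X * q)).map (algebraMap ℝ ℂ)).roots.filter
        (fun z : ℂ => z.im ≠ 0)).card = S.natDegree - Multiset.card S.roots := by
      rw [hrw]
      have hroots : ((-S).map (algebraMap ℝ ℂ)).roots = (S.map (algebraMap ℝ ℂ)).roots := by
        rw [Polynomial.map_neg, Polynomial.roots_neg]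
      rw [hroots, nonreal_card S hS]
    rw [hLHS, nonreal_card p hp]
    have hc1 := Polynomial.card_roots_le_derivative p
    have hc2 := Polynomial.card_roots' S
    rw [← hqdef] at hc1
    omega
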